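/- Let k be a commutative ring, B ⊆ A an extension of k-algebras with 1_B = 1_A, and let J_0 ⊆ J_1 ⊆ B be a chain of ideals of A contained in B. Then 1 ≤ d(B/J_1, A/J_1) ≤ d(B/J_0, A/J_0) ≤ d(B,A). -/

import Mathlib

/-! # Depth of subring extensions (Kadison–Young)
For a unital subring `B ⊆ A`, `CC B n` realizes the `n`-fold relative tensor power
`C_n(A,B) = A ⊗_B ⋯ ⊗_B A` (with `C_0(A,B) = B`) as a quotient of the iterated
tensor power over `ℤ` by the middle `B`-balancing relations, together with its
natural left/right `A`- and `B`-actions.  Bimodule maps, the divisibility relation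
`M ∣ q ⬝ N`, H-equivalence, the depth conditions and the minimum depth `d(B,A) ∈ ℕ∞`
are then defined exactly as in the paper. -/

open TensorProduct

universe u

variable (A : Type u) [Ring A]

/-- `Tpow A n` is the `(n+1)`-fold tensor power `A ⊗ℤ ⋯ ⊗ℤ A`. -/
noncomputable def Tpow : ℕ → ModuleCat.{u} ℤ
  | 0 => ModuleCat.of ℤ A
  | n + 1 => ModuleCat.of ℤ (A ⊗[ℤ] (Tpow n : Type u))

/-- Multiplication by `a : A` on the leftmost tensor factor. -/
noncomputable def lmulT (a : A) : ∀ n, (Tpow A n : Type u) →ₗ[ℤ] (Tpow A n : Type u)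
  | 0 => (LinearMap.mulLeft ℤ a : A →ₗ[ℤ] A)
  | n + 1 => LinearMap.rTensor (Tpow A n : Type u) (LinearMap.mulLeft ℤ a)

/-- Multiplication by `a : A` on the rightmost tensor factor. -/
noncomputable def rmulT (a : A) : ∀ n, (Tpow A n : Type u) →ₗ[ℤ] (Tpow A n : Type u)
  | 0 => (LinearMap.mulRight ℤ a : A →ₗ[ℤ] A)
  | n + 1 => LinearMap.lTensor A (rmulT a n)

private theorem lmulT_succ_apply (a : A) (n : ℕ) (x : A ⊗[ℤ] (Tpow A n : Type u)) :
    lmulT A a (n+1) x = LinearMap.rTensor (Tpow A n : Type u) (LinearMap.mulLeft ℤ a) x := rfl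

private theorem rmulT_succ_apply (a : A) (n : ℕ) (x : A ⊗[ℤ] (Tpow A n : Type u)) :
    rmulT A a (n+1) x = LinearMap.lTensor A (rmulT A a n) x := rfl

private theorem auxcomm (M : Type u) [AddCommGroup M] [Module ℤ M] (a : A) (g : M →ₗ[ℤ] M)
    (x : A ⊗[ℤ] M) :
    (LinearMap.rTensor M (LinearMap.mulLeft ℤ a)) ((LinearMap.lTensor A g) x) =
    (LinearMap.lTensor A g) ((LinearMap.rTensor M (LinearMap.mulLeft ℤ a)) x) := by
  induction x using TensorProduct.induction_on with
  | zero => simp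
  | tmul c t => simp
  | add y z hy hz => simp only [map_add, hy, hz]

theorem lmulT_rmulT_comm (a b : A) : ∀ (n : ℕ) (x : (Tpow A n : Type u)),
    lmulT A a n (rmulT A b n x) = rmulT A b n (lmulT A a n x)
  | 0, x => (mul_assoc a x b).symm
  | n + 1, x => by
    show (lmulT A a (n+1)) ((rmulT A b (n+1)) x) = (rmulT A b (n+1)) ((lmulT A a (n+1)) x)
    rw [lmulT, rmulT]
    exact auxcomm A (Tpow A n : Type u) a (rmulT A b n) x

private theorem aux1 (M : Type u) [AddCommGroup M] [Module ℤ M] (a c d : A) (t s : M) :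
    LinearMap.rTensor M (LinearMap.mulLeft ℤ a) (c ⊗ₜ[ℤ] t - d ⊗ₜ[ℤ] s) =
      (a * c) ⊗ₜ[ℤ] t - (a * d) ⊗ₜ[ℤ] s := by simp

private theorem aux2 (M : Type u) [AddCommGroup M] [Module ℤ M] (g : M →ₗ[ℤ] M) (c d : A)
    (t s : M) :
    LinearMap.lTensor A g (c ⊗ₜ[ℤ] t - d ⊗ₜ[ℤ] s) = c ⊗ₜ[ℤ] (g t) - d ⊗ₜ[ℤ] (g s) := by simp

private theorem aux3 (M : Type u) [AddCommGroup M] [Module ℤ M] (a c : A) (t : M) :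
    LinearMap.rTensor M (LinearMap.mulLeft ℤ a) (c ⊗ₜ[ℤ] t) = (a * c) ⊗ₜ[ℤ] t := by simp

private theorem aux4 (M : Type u) [AddCommGroup M] [Module ℤ M] (g : M →ₗ[ℤ] M) (c : A) (t : M) :
    LinearMap.lTensor A g (c ⊗ₜ[ℤ] t) = c ⊗ₜ[ℤ] (g t) := by simp


variable {A}

/-- The `B`-balancing relations inside `Tpow A n`. -/
noncomputable def rel (B : Subring A) : ∀ n, Submodule ℤ (Tpow A n : Type u)
  | 0 => ⊥
  | n + 1 =>
      Submodule.span ℤ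
        {x : (Tpow A (n+1) : Type u) |
          (∃ (a : A) (b : B) (t : (Tpow A n : Type u)),
            x = ((a * (b : A)) ⊗ₜ[ℤ] t : A ⊗[ℤ] (Tpow A n : Type u)) -
                 a ⊗ₜ[ℤ] (lmulT A (b : A) n t)) ∨
          (∃ (a : A) (r : (Tpow A n : Type u)), r ∈ rel B n ∧
            x = (a ⊗ₜ[ℤ] r : A ⊗[ℤ] (Tpow A n : Type u)))}

theorem rel_succ (B : Subring A) (n : ℕ) :
    rel B (n+1) =
      Submodule.span ℤ
        {x : (Tpow A (n+1) : Type u) |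
          (∃ (a : A) (b : B) (t : (Tpow A n : Type u)),
            x = ((a * (b : A)) ⊗ₜ[ℤ] t : A ⊗[ℤ] (Tpow A n : Type u)) -
                 a ⊗ₜ[ℤ] (lmulT A (b : A) n t)) ∨
          (∃ (a : A) (r : (Tpow A n : Type u)), r ∈ rel B n ∧
            x = (a ⊗ₜ[ℤ] r : A ⊗[ℤ] (Tpow A n : Type u)))} := rfl

theorem rel_le_comap_lmulT (B : Subring A) (a : A) :
    ∀ n, rel B n ≤ (rel B n).comap (lmulT A a n)
  | 0 => bot_le
  | n + 1 => by
    rw [rel_succ, Submodule.span_le]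
    rintro x (⟨a', b, t, rfl⟩ | ⟨a', r, hr, rfl⟩) <;>
      apply Submodule.mem_comap.mpr <;> rw [lmulT_succ_apply]
    · rw [map_sub, LinearMap.rTensor_tmul, LinearMap.rTensor_tmul, LinearMap.mulLeft_apply,
        LinearMap.mulLeft_apply]
      refine Submodule.subset_span (Or.inl ⟨a * a', b, t, ?_⟩)
      rw [mul_assoc]
    · rw [LinearMap.rTensor_tmul, LinearMap.mulLeft_apply]
      exact Submodule.subset_span (Or.inr ⟨a * a', r, hr, rfl⟩)

theorem rel_le_comap_rmulT (B : Subring A) (a : A) :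
    ∀ n, rel B n ≤ (rel B n).comap (rmulT A a n)
  | 0 => bot_le
  | n + 1 => by
    rw [rel_succ, Submodule.span_le]
    rintro x (⟨a', b, t, rfl⟩ | ⟨a', r, hr, rfl⟩) <;>
      apply Submodule.mem_comap.mpr <;> rw [rmulT_succ_apply]
    · rw [map_sub, LinearMap.lTensor_tmul, LinearMap.lTensor_tmul, ← lmulT_rmulT_comm]
      exact Submodule.subset_span (Or.inl ⟨a', b, rmulT A a n t, rfl⟩)
    · rw [LinearMap.lTensor_tmul]
      exact Submodule.subset_span
        (Or.inr ⟨a', rmulT A a n r, rel_le_comap_rmulT B a n hr, rfl⟩)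

/-- `CC B n` is `C_n(A,B) = A ⊗_B ⋯ ⊗_B A` (`n` factors of `A`), with `CC B 0 = B`. -/
noncomputable def CC (B : Subring A) : ℕ → ModuleCat.{u} ℤ
  | 0 => ModuleCat.of ℤ B
  | n + 1 => ModuleCat.of ℤ ((Tpow A n : Type u) ⧸ rel B n)

/-- The left `A`-action on `C_{n+1}(A,B)`. -/
noncomputable def lA (B : Subring A) (a : A) (n : ℕ) :
    (CC B (n+1) : Type u) →ₗ[ℤ] (CC B (n+1) : Type u) :=
  ModuleCat.Hom.hom (ModuleCat.ofHom (Submodule.mapQ _ _ (lmulT A a n) (rel_le_comap_lmulT B a n)))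

/-- The right `A`-action on `C_{n+1}(A,B)`. -/
noncomputable def rA (B : Subring A) (a : A) (n : ℕ) :
    (CC B (n+1) : Type u) →ₗ[ℤ] (CC B (n+1) : Type u) :=
  ModuleCat.Hom.hom (ModuleCat.ofHom (Submodule.mapQ _ _ (rmulT A a n) (rel_le_comap_rmulT B a n)))

/-- The left `B`-action on `C_n(A,B)`. -/
noncomputable def lB (B : Subring A) (b : B) : ∀ n, (CC B n : Type u) →ₗ[ℤ] (CC B n : Type u)
  | 0 => (LinearMap.mulLeft ℤ b : B →ₗ[ℤ] B)
  | n + 1 => lA B (b : A) n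

/-- The right `B`-action on `C_n(A,B)`. -/
noncomputable def rB (B : Subring A) (b : B) : ∀ n, (CC B n : Type u) →ₗ[ℤ] (CC B n : Type u)
  | 0 => (LinearMap.mulRight ℤ b : B →ₗ[ℤ] B)
  | n + 1 => rA B (b : A) n

/-- `f` is a morphism of `B`-`B`-bimodules `C_m(A,B) → C_n(A,B)`. -/
def IsBBHom (B : Subring A) {m n : ℕ} (f : (CC B m : Type u) →ₗ[ℤ] (CC B n : Type u)) : Prop :=
  ∀ b : B, (∀ x, f (lB B b m x) = lB B b n (f x)) ∧ (∀ x, f (rB B b m x) = rB B b n (f x))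

/-- `f` is a morphism of `A`-`B`-bimodules `C_{m+1}(A,B) → C_{n+1}(A,B)`. -/
def IsABHom (B : Subring A) {m n : ℕ}
    (f : (CC B (m+1) : Type u) →ₗ[ℤ] (CC B (n+1) : Type u)) : Prop :=
  (∀ (a : A) x, f (lA B a m x) = lA B a n (f x)) ∧
  (∀ (b : B) x, f (rB B b (m+1) x) = rB B b (n+1) (f x))

/-- `f` is a morphism of `B`-`A`-bimodules `C_{m+1}(A,B) → C_{n+1}(A,B)`. -/
def IsBAHom (B : Subring A) {m n : ℕ}
    (f : (CC B (m+1) : Type u) →ₗ[ℤ] (CC B (n+1) : Type u)) : Prop :=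
  (∀ (b : B) x, f (lB B b (m+1) x) = lB B b (n+1) (f x)) ∧
  (∀ (a : A) x, f (rA B a m x) = rA B a n (f x))

/-- `C_m(A,B)` divides a multiple of `C_n(A,B)` as `B`-`B`-bimodules. -/
def DividesBB (B : Subring A) (m n : ℕ) : Prop :=
  ∃ (r : ℕ) (f : Fin r → ((CC B m : Type u) →ₗ[ℤ] (CC B n : Type u)))
    (g : Fin r → ((CC B n : Type u) →ₗ[ℤ] (CC B m : Type u))),
    (∀ i, IsBBHom B (f i)) ∧ (∀ i, IsBBHom B (g i)) ∧
      ∑ i, (g i).comp (f i) = LinearMap.id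

/-- `C_{m+1}(A,B)` divides a multiple of `C_{n+1}(A,B)` as `A`-`B`-bimodules. -/
def DividesAB (B : Subring A) (m n : ℕ) : Prop :=
  ∃ (r : ℕ) (f : Fin r → ((CC B (m+1) : Type u) →ₗ[ℤ] (CC B (n+1) : Type u)))
    (g : Fin r → ((CC B (n+1) : Type u) →ₗ[ℤ] (CC B (m+1) : Type u))),
    (∀ i, IsABHom B (f i)) ∧ (∀ i, IsABHom B (g i)) ∧
      ∑ i, (g i).comp (f i) = LinearMap.id

/-- `C_{m+1}(A,B)` divides a multiple of `C_{n+1}(A,B)` as `B`-`A`-bimodules. -/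
def DividesBA (B : Subring A) (m n : ℕ) : Prop :=
  ∃ (r : ℕ) (f : Fin r → ((CC B (m+1) : Type u) →ₗ[ℤ] (CC B (n+1) : Type u)))
    (g : Fin r → ((CC B (n+1) : Type u) →ₗ[ℤ] (CC B (m+1) : Type u))),
    (∀ i, IsBAHom B (f i)) ∧ (∀ i, IsBAHom B (g i)) ∧
      ∑ i, (g i).comp (f i) = LinearMap.id

/-- H-equivalence of `C_m` and `C_n` as `B`-`B`-bimodules. -/
def HequivBB (B : Subring A) (m n : ℕ) : Prop := DividesBB B m n ∧ DividesBB B n m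

/-- H-equivalence of `C_{m+1}` and `C_{n+1}` as `A`-`B`-bimodules. -/
def HequivAB (B : Subring A) (m n : ℕ) : Prop := DividesAB B m n ∧ DividesAB B n m

/-- H-equivalence of `C_{m+1}` and `C_{n+1}` as `B`-`A`-bimodules. -/
def HequivBA (B : Subring A) (m n : ℕ) : Prop := DividesBA B m n ∧ DividesBA B n m

/-- The extension `B ⊆ A` has depth `d`: depth `2n+1` (`n ≥ 0`) means
`C_{n+1} ∼ C_n` as `B`-`B`-bimodules, and right (resp. left) depth `2n` (`n ≥ 1`)
means `C_{n+1} ∼ C_n` as `A`-`B`- (resp. `B`-`A`-) bimodules. -/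
def HasDepth (B : Subring A) (d : ℕ) : Prop :=
  (∃ n : ℕ, d = 2 * n + 1 ∧ HequivBB B (n+1) n) ∨
  (∃ n : ℕ, d = 2 * (n+1) ∧ (HequivAB B (n+1) n ∨ HequivBA B (n+1) n))

/-- The minimum depth `d(B,A) ∈ ℕ∞` of the subring extension `B ⊆ A`. -/
noncomputable def depth (B : Subring A) : ℕ∞ :=
  sInf {d : ℕ∞ | ∃ m : ℕ, HasDepth B m ∧ d = (m : ℕ∞)}


/-! ### Transfer of depth along surjective ring homomorphisms with kernel inside `B` -/

section Transfer

variable {A' : Type u} [Ring A'] (π : A →+* A')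

/-- `π ⊗ ⋯ ⊗ π : Tpow A n → Tpow A' n`. -/
noncomputable def piT : ∀ n, (Tpow A n : Type u) →ₗ[ℤ] (Tpow A' n : Type u)
  | 0 => π.toAddMonoidHom.toIntLinearMap
  | n + 1 => TensorProduct.map π.toAddMonoidHom.toIntLinearMap (piT n)

theorem piT_zero_apply (x : A) : (piT π 0 x : A') = π x := rfl

theorem pil_apply (x : A) : π.toAddMonoidHom.toIntLinearMap x = π x := rfl

theorem piT_succ_apply (n : ℕ) (x : A ⊗[ℤ] (Tpow A n : Type u)) :
    piT π (n+1) x = TensorProduct.map π.toAddMonoidHom.toIntLinearMap (piT π n) x := rfl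

theorem piT_lmulT (a : A) : ∀ (n : ℕ) (x : (Tpow A n : Type u)),
    piT π n (lmulT A a n x) = lmulT A' (π a) n (piT π n x)
  | 0, x => π.map_mul a x
  | n+1, x => by
    change (A ⊗[ℤ] (Tpow A n : Type u)) at x
    show TensorProduct.map π.toAddMonoidHom.toIntLinearMap (piT π n)
        (LinearMap.rTensor (Tpow A n : Type u) (LinearMap.mulLeft ℤ a) x) =
      LinearMap.rTensor (Tpow A' n : Type u) (LinearMap.mulLeft ℤ (π a))
        (TensorProduct.map π.toAddMonoidHom.toIntLinearMap (piT π n) x)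
    induction x using TensorProduct.induction_on with
    | zero => simp
    | tmul c t =>
      simp only [piT_succ_apply, LinearMap.rTensor_tmul, TensorProduct.map_tmul,
        LinearMap.mulLeft_apply, pil_apply, map_mul]
    | add y z hy hz => simp only [map_add, hy, hz]

private theorem auxmapr {M M' : Type u} [AddCommGroup M] [Module ℤ M] [AddCommGroup M']
    [Module ℤ M'] (g : M →ₗ[ℤ] M) (g' : M' →ₗ[ℤ] M') (p : M →ₗ[ℤ] M')
    (hp : ∀ t, p (g t) = g' (p t)) (x : A ⊗[ℤ] M) :
    TensorProduct.map π.toAddMonoidHom.toIntLinearMap p (LinearMap.lTensor A g x) =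
      LinearMap.lTensor A' g' (TensorProduct.map π.toAddMonoidHom.toIntLinearMap p x) := by
  induction x using TensorProduct.induction_on with
  | zero => simp
  | tmul c t => simp only [LinearMap.lTensor_tmul, TensorProduct.map_tmul, hp]
  | add y z hy hz => simp only [map_add, hy, hz]

theorem piT_rmulT (a : A) : ∀ (n : ℕ) (x : (Tpow A n : Type u)),
    piT π n (rmulT A a n x) = rmulT A' (π a) n (piT π n x)
  | 0, x => π.map_mul x a
  | n+1, x => by
    change (A ⊗[ℤ] (Tpow A n : Type u)) at x
    show TensorProduct.map π.toAddMonoidHom.toIntLinearMap (piT π n)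
        (LinearMap.lTensor A (rmulT A a n) x) =
      LinearMap.lTensor A' (rmulT A' (π a) n)
        (TensorProduct.map π.toAddMonoidHom.toIntLinearMap (piT π n) x)
    exact auxmapr π (rmulT A a n) (rmulT A' (π a) n) (piT π n) (piT_rmulT a n) x

theorem piT_surjective (hπ : Function.Surjective π) :
    ∀ n, Function.Surjective (piT π n)
  | 0 => hπ
  | n+1 => TensorProduct.map_surjective hπ (piT_surjective hπ n)

theorem lmulT_one_right (R : Type u) [Ring R] (x : R) : lmulT R x 0 (1 : R) = x := by
  show x * 1 = x
  exact mul_one x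

theorem lB_one_right {R : Type u} [Ring R] (C : Subring R) (x : C) :
    lB C x 0 (1 : (C : Type u)) = x := by
  show x * 1 = x
  exact mul_one x

theorem rel_map_le (B : Subring A) :
    ∀ n, rel B n ≤ (rel (B.map π) n).comap (piT π n)
  | 0 => bot_le
  | n + 1 => by
    rw [rel_succ, Submodule.span_le]
    rintro x (⟨a, b, t, rfl⟩ | ⟨a, r, hr, rfl⟩) <;>
      apply Submodule.mem_comap.mpr <;> rw [piT_succ_apply]
    · rw [map_sub, TensorProduct.map_tmul, TensorProduct.map_tmul]
      refine Submodule.subset_span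
        (Or.inl ⟨π a, ⟨π (b : A), Subring.mem_map.2 ⟨(b : A), b.2, rfl⟩⟩, piT π n t, ?_⟩)
      rw [piT_lmulT]
      simp only [pil_apply, map_mul]
      rfl
    · rw [TensorProduct.map_tmul]
      exact Submodule.subset_span (Or.inr ⟨π a, piT π n r, rel_map_le B n hr, rfl⟩)

theorem rel_le_map (hπ : Function.Surjective π) (B : Subring A) :
    ∀ n, rel (B.map π) n ≤ (rel B n).map (piT π n)
  | 0 => bot_le
  | n+1 => by
    rw [rel_succ, Submodule.span_le]
    rintro x (⟨a', b', t', rfl⟩ | ⟨a', r', hr', rfl⟩)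
    · obtain ⟨a, rfl⟩ := hπ a'
      obtain ⟨b, hb, hbeq⟩ := Subring.mem_map.1 b'.2
      obtain ⟨t, rfl⟩ := piT_surjective π hπ n t'
      refine Submodule.mem_map.2 ⟨(a * b) ⊗ₜ[ℤ] t - a ⊗ₜ[ℤ] (lmulT A b n t),
        Submodule.subset_span (Or.inl ⟨a, ⟨b, hb⟩, t, rfl⟩), ?_⟩
      rw [piT_succ_apply, map_sub, TensorProduct.map_tmul, TensorProduct.map_tmul, piT_lmulT]
      simp only [pil_apply, map_mul, hbeq]
      rfl
    · obtain ⟨a, rfl⟩ := hπ a'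
      obtain ⟨r, hr, rfl⟩ := rel_le_map hπ B n hr'
      refine Submodule.mem_map.2 ⟨a ⊗ₜ[ℤ] r, Submodule.subset_span (Or.inr ⟨a, r, hr, rfl⟩), ?_⟩
      rw [piT_succ_apply, TensorProduct.map_tmul, pil_apply]

/-- The submodule of `Tpow A n` generated by the relations together with tensors led by
an element of `ker π`. -/
noncomputable def KT (B : Subring A) (n : ℕ) : Submodule ℤ (Tpow A n : Type u) :=
  rel B n ⊔ Submodule.span ℤ
    {x : (Tpow A n : Type u) | ∃ (j : A) (t : (Tpow A n : Type u)), π j = 0 ∧ x = lmulT A j n t}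

theorem KT_tmul (B : Subring A) (hB : ∀ x, π x = 0 → x ∈ B) (n : ℕ) (a : A)
    (x : (Tpow A n : Type u)) (hx : x ∈ KT π B n) :
    (a ⊗ₜ[ℤ] x : A ⊗[ℤ] (Tpow A n : Type u)) ∈ KT π B (n+1) := by
  obtain ⟨u, hu, v, hv, rfl⟩ := Submodule.mem_sup.1 hx
  clear hx
  rw [TensorProduct.tmul_add]
  refine add_mem (Submodule.mem_sup_left (M := (Tpow A (n+1) : Type u))
    (Submodule.subset_span (M := (Tpow A (n+1) : Type u)) (Or.inr ⟨a, u, hu, rfl⟩))) ?_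
  induction hv using Submodule.span_induction with
  | mem y hy =>
    obtain ⟨j, t, hj, rfl⟩ := hy
    have h1 : ((a*j) ⊗ₜ[ℤ] t : A ⊗[ℤ] (Tpow A n : Type u)) ∈ KT π B (n+1) := by
      refine Submodule.mem_sup_right (M := (Tpow A (n+1) : Type u)) (Submodule.subset_span (M := (Tpow A (n+1) : Type u))
        ⟨a*j, (1:A) ⊗ₜ[ℤ] t, by rw [map_mul, hj, mul_zero], ?_⟩)
      rw [lmulT_succ_apply, LinearMap.rTensor_tmul, LinearMap.mulLeft_apply, mul_one]
    have h2 : ((a*j) ⊗ₜ[ℤ] t - a ⊗ₜ[ℤ] (lmulT A j n t) :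
        A ⊗[ℤ] (Tpow A n : Type u)) ∈ rel B (n+1) :=
      Submodule.subset_span (M := (Tpow A (n+1) : Type u)) (Or.inl ⟨a, ⟨j, hB j hj⟩, t, rfl⟩)
    have h3 := sub_mem h1 (Submodule.mem_sup_left h2 : _ ∈ KT π B (n+1))
    simpa using h3
  | zero => rw [TensorProduct.tmul_zero]; exact zero_mem _
  | add y z _ _ hy hz => rw [TensorProduct.tmul_add]; exact add_mem hy hz
  | smul c y _ hy =>
    have h := Submodule.smul_mem _ c hy
    exact (congrArg (fun z => z ∈ KT π B (n+1))
      ((TensorProduct.mk ℤ A (Tpow A n : Type u) a).map_smul c y)).mpr h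

theorem ker_piT_le (hπ : Function.Surjective π) (B : Subring A) (hB : ∀ x, π x = 0 → x ∈ B) :
    ∀ n, LinearMap.ker (piT π n) ≤ KT π B n
  | 0 => fun x hx =>
      Submodule.mem_sup_right (Submodule.subset_span
        ⟨x, (1:A), hx, (lmulT_one_right A x).symm⟩)
  | n+1 => by
    intro x hx
    letI := (LinearMap.ker (piT π n)).module
    have hπl : Function.Surjective π.toAddMonoidHom.toIntLinearMap := hπ
    have heq : piT π (n+1) = TensorProduct.map π.toAddMonoidHom.toIntLinearMap (piT π n) := rfl
    rw [LinearMap.mem_ker, heq] at hx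
    change (A ⊗[ℤ] (Tpow A n : Type u)) at x
    have hker := TensorProduct.map_ker
      (LinearMap.exact_subtype_ker_map π.toAddMonoidHom.toIntLinearMap) hπl
      (LinearMap.exact_subtype_ker_map (piT π n)) (piT_surjective π hπ n)
    have hx' : x ∈ LinearMap.range
        (LinearMap.lTensor A (LinearMap.ker (piT π n)).subtype) ⊔
        LinearMap.range (LinearMap.rTensor (Tpow A n : Type u)
          (LinearMap.ker π.toAddMonoidHom.toIntLinearMap).subtype) := by
      rw [← hker]; exact hx
    obtain ⟨u, hu, v, hv, rfl⟩ := Submodule.mem_sup.1 hx'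
    clear hx hx'
    refine add_mem ?_ ?_
    · obtain ⟨z, rfl⟩ := hu
      induction z using TensorProduct.induction_on with
      | zero => rw [map_zero]; exact zero_mem _
      | tmul a r =>
        rw [LinearMap.lTensor_tmul]
        exact KT_tmul π B hB n a _ (ker_piT_le hπ B hB n r.2)
      | add y z hy hz => rw [map_add]; exact add_mem hy hz
    · obtain ⟨z, rfl⟩ := hv
      induction z using TensorProduct.induction_on with
      | zero => rw [map_zero]; exact zero_mem _
      | tmul j t =>
        rw [LinearMap.rTensor_tmul]
        refine Submodule.mem_sup_right (Submodule.subset_span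
          ⟨(j : A), (1:A) ⊗ₜ[ℤ] t, j.2, ?_⟩)
        rw [lmulT_succ_apply, LinearMap.rTensor_tmul, LinearMap.mulLeft_apply, mul_one,
          Submodule.subtype_apply]
      | add y z hy hz => rw [map_add]; exact add_mem hy hz

/-- Restriction of `π` to a map `B → B.map π`. -/
noncomputable def PC0 (B : Subring A) : (B : Type u) →ₗ[ℤ] ((B.map π) : Type u) :=
  AddMonoidHom.toIntLinearMap
    { toFun := fun b => ⟨π b, Subring.mem_map.2 ⟨b, b.2, rfl⟩⟩
      map_zero' := Subtype.ext (by simp)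
      map_add' := fun x y => Subtype.ext (by simp) }

/-- The canonical map `C_n(A,B) → C_n(A', B')` induced by `π`. -/
noncomputable def PC (B : Subring A) : ∀ n, (CC B n : Type u) →ₗ[ℤ] (CC (B.map π) n : Type u)
  | 0 => PC0 π B
  | n+1 => ModuleCat.Hom.hom (ModuleCat.ofHom (Submodule.mapQ _ _ (piT π n) (rel_map_le π B n)))

theorem PC_mk (B : Subring A) (n : ℕ) (x : (Tpow A n : Type u)) :
    PC π B (n+1) (Submodule.Quotient.mk x) = Submodule.Quotient.mk (piT π n x) :=
  rfl

theorem lA_mk (B : Subring A) (a : A) (n : ℕ) (x : (Tpow A n : Type u)) :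
    lA B a n (Submodule.Quotient.mk x) = Submodule.Quotient.mk (lmulT A a n x) :=
  rfl

theorem rA_mk (B : Subring A) (a : A) (n : ℕ) (x : (Tpow A n : Type u)) :
    rA B a n (Submodule.Quotient.mk x) = Submodule.Quotient.mk (rmulT A a n x) :=
  rfl

theorem PC_surjective (hπ : Function.Surjective π) (B : Subring A) :
    ∀ n, Function.Surjective (PC π B n)
  | 0 => fun y => by
      obtain ⟨x, hx, hxeq⟩ := Subring.mem_map.1 y.2
      exact ⟨⟨x, hx⟩, Subtype.ext hxeq⟩
  | n+1 => fun y => by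
      obtain ⟨yt, rfl⟩ := Submodule.Quotient.mk_surjective _ y
      obtain ⟨xt, rfl⟩ := piT_surjective π hπ n yt
      exact ⟨Submodule.Quotient.mk xt, PC_mk π B n xt⟩

theorem PC_lA (B : Subring A) (a : A) (n : ℕ) (x : (CC B (n+1) : Type u)) :
    PC π B (n+1) (lA B a n x) = lA (B.map π) (π a) n (PC π B (n+1) x) := by
  obtain ⟨xt, rfl⟩ := Submodule.Quotient.mk_surjective _ x
  rw [lA_mk, PC_mk, PC_mk, lA_mk, piT_lmulT]

theorem PC_rA (B : Subring A) (a : A) (n : ℕ) (x : (CC B (n+1) : Type u)) :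
    PC π B (n+1) (rA B a n x) = rA (B.map π) (π a) n (PC π B (n+1) x) := by
  obtain ⟨xt, rfl⟩ := Submodule.Quotient.mk_surjective _ x
  rw [rA_mk, PC_mk, PC_mk, rA_mk, piT_rmulT]

/-- The image in `B.map π` of `b : B`. -/
noncomputable def mapB (B : Subring A) (b : B) : (B.map π : Subring A') :=
  ⟨π b, Subring.mem_map.2 ⟨b, b.2, rfl⟩⟩

theorem PC_lB (B : Subring A) (b : B) :
    ∀ (n : ℕ) (x : (CC B n : Type u)),
      PC π B n (lB B b n x) = lB (B.map π) (mapB π B b) n (PC π B n x)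
  | 0, x => Subtype.ext (π.map_mul (b : A) ((@id (B : Type u) x : A)))
  | n+1, x => PC_lA π B (b : A) n x

theorem PC_rB (B : Subring A) (b : B) :
    ∀ (n : ℕ) (x : (CC B n : Type u)),
      PC π B n (rB B b n x) = rB (B.map π) (mapB π B b) n (PC π B n x)
  | 0, x => Subtype.ext (π.map_mul ((@id (B : Type u) x : A)) (b : A))
  | n+1, x => PC_rA π B (b : A) n x

theorem lmulT_zero {R : Type u} [Ring R] : ∀ n, lmulT R (0 : R) n = 0
  | 0 => LinearMap.ext fun x => zero_mul (@id R x)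
  | n+1 => by
    show LinearMap.rTensor (Tpow R n : Type u) (LinearMap.mulLeft ℤ (0:R)) = 0
    rw [LinearMap.mulLeft_zero_eq_zero, LinearMap.rTensor_zero]

theorem lB_eq_zero {R : Type u} [Ring R] (C : Subring R) (j : C) (hj : (j : R) = 0) :
    ∀ (n : ℕ) (x : (CC C n : Type u)), lB C j n x = 0
  | 0, x => Subtype.ext (show (j : R) * ((@id (C : Type u) x : R)) = 0 by rw [hj, zero_mul])
  | n+1, x => by
    obtain ⟨y, rfl⟩ := Submodule.Quotient.mk_surjective _ x
    show lA C (j : R) n (Submodule.Quotient.mk y) = 0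
    rw [lA_mk, hj, lmulT_zero]
    simp
    rfl

/-- The submodule of `C_n(A,B)` generated by elements `j · y` with `j ∈ B ∩ ker π`. -/
noncomputable def KC (B : Subring A) (n : ℕ) : Submodule ℤ (CC B n : Type u) :=
  Submodule.span ℤ
    {x : (CC B n : Type u) | ∃ (j : B) (y : (CC B n : Type u)), π (j : A) = 0 ∧ x = lB B j n y}

theorem PC_ker_le (hπ : Function.Surjective π) (B : Subring A) (hB : ∀ x, π x = 0 → x ∈ B) :
    ∀ (n : ℕ) (x : (CC B n : Type u)), PC π B n x = 0 → x ∈ KC π B n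
  | 0, x, hx => by
    refine Submodule.subset_span ⟨@id (B : Type u) x, (1 : (B : Type u)), ?_, ?_⟩
    · exact congrArg Subtype.val hx
    · exact (lB_one_right B (@id (B : Type u) x)).symm
  | n+1, x, hx => by
    obtain ⟨xt, rfl⟩ := Submodule.Quotient.mk_surjective _ x
    rw [PC_mk] at hx
    have h1 : piT π n xt ∈ rel (B.map π) n := (Submodule.Quotient.mk_eq_zero _).1 hx
    obtain ⟨r, hr, hreq⟩ := Submodule.mem_map.1 (rel_le_map π hπ B n h1)
    have h2 : xt - r ∈ LinearMap.ker (piT π n) := by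
      rw [LinearMap.mem_ker, map_sub, hreq, sub_self]
    have h3 : xt ∈ KT π B n := by
      have h4 := ker_piT_le π hπ B hB n h2
      have h5 : xt = (xt - r) + r := by abel
      rw [h5]
      exact add_mem h4 (Submodule.mem_sup_left hr)
    obtain ⟨u, hu, v, hv, huv⟩ := Submodule.mem_sup.1 h3
    have hmk : (Submodule.Quotient.mk xt : (CC B (n+1) : Type u)) = Submodule.Quotient.mk v := by
      rw [Submodule.Quotient.eq]
      rw [← huv]
      simpa using hu
    rw [hmk]
    clear hmk huv hx h1 h2 h3 hu
    induction hv using Submodule.span_induction with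
    | mem y hy =>
      obtain ⟨j, t, hj, rfl⟩ := hy
      exact Submodule.subset_span
        ⟨⟨j, hB j hj⟩, Submodule.Quotient.mk t, hj, (lA_mk B j n t).symm⟩
    | zero => rw [Submodule.Quotient.mk_zero]; exact zero_mem _
    | add y z _ _ hy hz => rw [Submodule.Quotient.mk_add]; exact add_mem hy hz
    | smul c y _ hy =>
      refine (Iff.of_eq (congrArg (fun (z : (CC B (n+1) : Type u)) => z ∈ KC π B (n+1)) ?_)).mpr
        (Submodule.smul_mem _ c hy)
      have e1 := int_smul_eq_zsmul (Tpow A n).isModule c y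
      have e2 := int_smul_eq_zsmul (CC B (n+1)).isModule c (Submodule.Quotient.mk y)
      have e3 := map_zsmul (rel B n).mkQ c y
      exact (congrArg (rel B n).mkQ e1).trans (e3.trans e2.symm)

theorem ker_transfer (hπ : Function.Surjective π) (B : Subring A)
    (hB : ∀ x, π x = 0 → x ∈ B) {m n : ℕ}
    (f : (CC B m : Type u) →ₗ[ℤ] (CC B n : Type u))
    (hlB : ∀ (b : B) (x : (CC B m : Type u)), f (lB B b m x) = lB B b n (f x)) :
    ∀ x, PC π B m x = 0 → PC π B n (f x) = 0 := by
  intro x hx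
  have hmem := PC_ker_le π hπ B hB m x hx
  clear hx
  induction hmem using Submodule.span_induction with
  | mem y hy =>
    obtain ⟨j, z, hj, rfl⟩ := hy
    rw [hlB, PC_lB]
    exact lB_eq_zero _ (mapB π B j) hj n _
  | zero => rw [map_zero, map_zero]
  | add y z _ _ hy hz => rw [map_add, map_add, hy, hz, add_zero]
  | smul c y _ hy => rw [LinearMap.map_smul, LinearMap.map_smul, hy, smul_zero]

/-- A set-theoretic section of `PC`. -/
noncomputable def secC (hπ : Function.Surjective π) (B : Subring A) (n : ℕ) (y : (CC (B.map π) n : Type u)) :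
    (CC B n : Type u) :=
  (PC_surjective π hπ B n y).choose

theorem secC_spec (hπ : Function.Surjective π) (B : Subring A) (n : ℕ) (y : (CC (B.map π) n : Type u)) :
    PC π B n (secC π hπ B n y) = y :=
  (PC_surjective π hπ B n y).choose_spec

theorem PC_congr {B : Subring A} {m n : ℕ}
    {f : (CC B m : Type u) →ₗ[ℤ] (CC B n : Type u)}
    (hf : ∀ x, PC π B m x = 0 → PC π B n (f x) = 0)
    {u v : (CC B m : Type u)} (huv : PC π B m u = PC π B m v) :
    PC π B n (f u) = PC π B n (f v) := by
  have h1 : PC π B m (u - v) = 0 := by rw [map_sub, huv, sub_self]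
  have h2 := hf _ h1
  rw [map_sub, map_sub, sub_eq_zero] at h2
  exact h2

/-- Transfer of a map `C_m(A,B) → C_n(A,B)` to a map `C_m(A',B') → C_n(A',B')`. -/
noncomputable def tmap (hπ : Function.Surjective π) (B : Subring A) {m n : ℕ}
    (f : (CC B m : Type u) →ₗ[ℤ] (CC B n : Type u))
    (hf : ∀ x, PC π B m x = 0 → PC π B n (f x) = 0) :
    (CC (B.map π) m : Type u) →ₗ[ℤ] (CC (B.map π) n : Type u) where
  toFun y := PC π B n (f (secC π hπ B m y))
  map_add' y z := by
    have h1 : PC π B m (secC π hπ B m (y + z)) =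
        PC π B m (secC π hπ B m y + secC π hπ B m z) := by
      rw [map_add, secC_spec, secC_spec, secC_spec]
    rw [PC_congr π hf h1, map_add, map_add]
  map_smul' c y := by
    have h1 := (PC π B m).map_smul c (secC π hπ B m y)
    rw [secC_spec] at h1
    rw [← h1, PC_congr π hf (secC_spec π hπ B m _), LinearMap.map_smul, LinearMap.map_smul]
    rfl

theorem tmap_PC (hπ : Function.Surjective π) (B : Subring A) {m n : ℕ}
    (f : (CC B m : Type u) →ₗ[ℤ] (CC B n : Type u))
    (hf : ∀ x, PC π B m x = 0 → PC π B n (f x) = 0) (x : (CC B m : Type u)) :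
    tmap π hπ B f hf (PC π B m x) = PC π B n (f x) :=
  PC_congr π hf (secC_spec π hπ B m (PC π B m x))

theorem sum_id_transfer (hπ : Function.Surjective π) (B : Subring A) {m n : ℕ} (r : ℕ)
    (f : Fin r → ((CC B m : Type u) →ₗ[ℤ] (CC B n : Type u)))
    (g : Fin r → ((CC B n : Type u) →ₗ[ℤ] (CC B m : Type u)))
    (hf : ∀ i x, PC π B m x = 0 → PC π B n (f i x) = 0)
    (hg : ∀ i x, PC π B n x = 0 → PC π B m (g i x) = 0)
    (hsum : ∑ i, (g i).comp (f i) = LinearMap.id) :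
    ∑ i, (tmap π hπ B (g i) (hg i)).comp (tmap π hπ B (f i) (hf i)) = LinearMap.id := by
  ext y
  obtain ⟨x, rfl⟩ := PC_surjective π hπ B m y
  have hx := LinearMap.congr_fun hsum x
  simp only [LinearMap.sum_apply, LinearMap.comp_apply, LinearMap.id_apply] at hx ⊢
  calc ∑ i, tmap π hπ B (g i) (hg i) (tmap π hπ B (f i) (hf i) (PC π B m x))
      = ∑ i, PC π B m (g i (f i x)) := by
        refine Finset.sum_congr rfl fun i _ => ?_
        rw [tmap_PC, tmap_PC]
    _ = PC π B m (∑ i, g i (f i x)) := (map_sum _ _ _).symm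
    _ = PC π B m x := by rw [hx]

theorem dividesBB_transfer (hπ : Function.Surjective π) (B : Subring A) (hB : ∀ x, π x = 0 → x ∈ B) {m n : ℕ}
    (h : DividesBB B m n) : DividesBB (B.map π) m n := by
  obtain ⟨r, f, g, hf, hg, hsum⟩ := h
  have hfk : ∀ i x, PC π B m x = 0 → PC π B n (f i x) = 0 :=
    fun i => ker_transfer π hπ B hB (f i) (fun b => (hf i b).1)
  have hgk : ∀ i x, PC π B n x = 0 → PC π B m (g i x) = 0 :=
    fun i => ker_transfer π hπ B hB (g i) (fun b => (hg i b).1)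
  refine ⟨r, fun i => tmap π hπ B (f i) (hfk i), fun i => tmap π hπ B (g i) (hgk i),
    ?_, ?_, sum_id_transfer π hπ B r f g hfk hgk hsum⟩
  · intro i b'
    obtain ⟨b, hb, hbeq⟩ := Subring.mem_map.1 b'.2
    have hb' : b' = mapB π B ⟨b, hb⟩ := Subtype.ext hbeq.symm
    constructor
    · intro x'
      obtain ⟨x, rfl⟩ := PC_surjective π hπ B m x'
      rw [hb', ← PC_lB, tmap_PC, tmap_PC, (hf i ⟨b, hb⟩).1 x, PC_lB]
    · intro x'
      obtain ⟨x, rfl⟩ := PC_surjective π hπ B m x'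
      rw [hb', ← PC_rB, tmap_PC, tmap_PC, (hf i ⟨b, hb⟩).2 x, PC_rB]
  · intro i b'
    obtain ⟨b, hb, hbeq⟩ := Subring.mem_map.1 b'.2
    have hb' : b' = mapB π B ⟨b, hb⟩ := Subtype.ext hbeq.symm
    constructor
    · intro x'
      obtain ⟨x, rfl⟩ := PC_surjective π hπ B n x'
      rw [hb', ← PC_lB, tmap_PC, tmap_PC, (hg i ⟨b, hb⟩).1 x, PC_lB]
    · intro x'
      obtain ⟨x, rfl⟩ := PC_surjective π hπ B n x'
      rw [hb', ← PC_rB, tmap_PC, tmap_PC, (hg i ⟨b, hb⟩).2 x, PC_rB]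

theorem dividesAB_transfer (hπ : Function.Surjective π) (B : Subring A) (hB : ∀ x, π x = 0 → x ∈ B) {m n : ℕ}
    (h : DividesAB B m n) : DividesAB (B.map π) m n := by
  obtain ⟨r, f, g, hf, hg, hsum⟩ := h
  have hfk : ∀ i x, PC π B (m+1) x = 0 → PC π B (n+1) (f i x) = 0 :=
    fun i => ker_transfer π hπ B hB (f i) (fun b x => (hf i).1 (b : A) x)
  have hgk : ∀ i x, PC π B (n+1) x = 0 → PC π B (m+1) (g i x) = 0 :=
    fun i => ker_transfer π hπ B hB (g i) (fun b x => (hg i).1 (b : A) x)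
  refine ⟨r, fun i => tmap π hπ B (f i) (hfk i), fun i => tmap π hπ B (g i) (hgk i),
    ?_, ?_, sum_id_transfer π hπ B r f g hfk hgk hsum⟩
  · intro i
    constructor
    · intro a' x'
      obtain ⟨a, rfl⟩ := hπ a'
      obtain ⟨x, rfl⟩ := PC_surjective π hπ B (m+1) x'
      rw [← PC_lA, tmap_PC, tmap_PC, (hf i).1 a x, PC_lA]
    · intro b' x'
      obtain ⟨b, hb, hbeq⟩ := Subring.mem_map.1 b'.2
      have hb' : b' = mapB π B ⟨b, hb⟩ := Subtype.ext hbeq.symm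
      obtain ⟨x, rfl⟩ := PC_surjective π hπ B (m+1) x'
      rw [hb', ← PC_rB, tmap_PC, tmap_PC, (hf i).2 ⟨b, hb⟩ x, PC_rB]
  · intro i
    constructor
    · intro a' x'
      obtain ⟨a, rfl⟩ := hπ a'
      obtain ⟨x, rfl⟩ := PC_surjective π hπ B (n+1) x'
      rw [← PC_lA, tmap_PC, tmap_PC, (hg i).1 a x, PC_lA]
    · intro b' x'
      obtain ⟨b, hb, hbeq⟩ := Subring.mem_map.1 b'.2
      have hb' : b' = mapB π B ⟨b, hb⟩ := Subtype.ext hbeq.symm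
      obtain ⟨x, rfl⟩ := PC_surjective π hπ B (n+1) x'
      rw [hb', ← PC_rB, tmap_PC, tmap_PC, (hg i).2 ⟨b, hb⟩ x, PC_rB]

theorem dividesBA_transfer (hπ : Function.Surjective π) (B : Subring A) (hB : ∀ x, π x = 0 → x ∈ B) {m n : ℕ}
    (h : DividesBA B m n) : DividesBA (B.map π) m n := by
  obtain ⟨r, f, g, hf, hg, hsum⟩ := h
  have hfk : ∀ i x, PC π B (m+1) x = 0 → PC π B (n+1) (f i x) = 0 :=
    fun i => ker_transfer π hπ B hB (f i) (fun b x => (hf i).1 b x)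
  have hgk : ∀ i x, PC π B (n+1) x = 0 → PC π B (m+1) (g i x) = 0 :=
    fun i => ker_transfer π hπ B hB (g i) (fun b x => (hg i).1 b x)
  refine ⟨r, fun i => tmap π hπ B (f i) (hfk i), fun i => tmap π hπ B (g i) (hgk i),
    ?_, ?_, sum_id_transfer π hπ B r f g hfk hgk hsum⟩
  · intro i
    constructor
    · intro b' x'
      obtain ⟨b, hb, hbeq⟩ := Subring.mem_map.1 b'.2
      have hb' : b' = mapB π B ⟨b, hb⟩ := Subtype.ext hbeq.symm
      obtain ⟨x, rfl⟩ := PC_surjective π hπ B (m+1) x'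
      rw [hb', ← PC_lB, tmap_PC, tmap_PC, (hf i).1 ⟨b, hb⟩ x, PC_lB]
    · intro a' x'
      obtain ⟨a, rfl⟩ := hπ a'
      obtain ⟨x, rfl⟩ := PC_surjective π hπ B (m+1) x'
      rw [← PC_rA, tmap_PC, tmap_PC, (hf i).2 a x, PC_rA]
  · intro i
    constructor
    · intro b' x'
      obtain ⟨b, hb, hbeq⟩ := Subring.mem_map.1 b'.2
      have hb' : b' = mapB π B ⟨b, hb⟩ := Subtype.ext hbeq.symm
      obtain ⟨x, rfl⟩ := PC_surjective π hπ B (n+1) x'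
      rw [hb', ← PC_lB, tmap_PC, tmap_PC, (hg i).1 ⟨b, hb⟩ x, PC_lB]
    · intro a' x'
      obtain ⟨a, rfl⟩ := hπ a'
      obtain ⟨x, rfl⟩ := PC_surjective π hπ B (n+1) x'
      rw [← PC_rA, tmap_PC, tmap_PC, (hg i).2 a x, PC_rA]

theorem hasDepth_transfer (hπ : Function.Surjective π) (B : Subring A) (hB : ∀ x, π x = 0 → x ∈ B) {d : ℕ}
    (h : HasDepth B d) : HasDepth (B.map π) d := by
  rcases h with ⟨n, rfl, h1, h2⟩ | ⟨n, rfl, h⟩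
  · exact Or.inl ⟨n, rfl, dividesBB_transfer π hπ B hB h1, dividesBB_transfer π hπ B hB h2⟩
  · refine Or.inr ⟨n, rfl, ?_⟩
    rcases h with ⟨h1, h2⟩ | ⟨h1, h2⟩
    · exact Or.inl ⟨dividesAB_transfer π hπ B hB h1, dividesAB_transfer π hπ B hB h2⟩
    · exact Or.inr ⟨dividesBA_transfer π hπ B hB h1, dividesBA_transfer π hπ B hB h2⟩

theorem depth_map_le (hπ : Function.Surjective π) (B : Subring A) (hB : ∀ x, π x = 0 → x ∈ B) :
    depth (B.map π) ≤ depth B := by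
  apply sInf_le_sInf
  rintro d ⟨m, hm, rfl⟩
  exact ⟨m, hasDepth_transfer π hπ B hB hm, rfl⟩

end Transfer

theorem one_le_depth (B : Subring A) : (1 : ℕ∞) ≤ depth B := by
  apply le_sInf
  rintro d ⟨m, hm, rfl⟩
  rcases hm with ⟨n, rfl, -⟩ | ⟨n, rfl, -⟩ <;> exact_mod_cast Nat.le_add_left 1 _

/-- The ring homomorphism `A/J₀ → A/J₁` induced by an inclusion `J₀ ⊆ J₁` of
two-sided ideals. -/
noncomputable def factorHom {R : Type u} [Ring R] (J0 J1 : TwoSidedIdeal R)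
    (h : ∀ x ∈ J0, x ∈ J1) : J0.ringCon.Quotient →+* J1.ringCon.Quotient where
  toFun := Quotient.lift (fun a => (J1.ringCon.mk' a : J1.ringCon.Quotient)) (by
    intro a b hab
    have h1 : J0.ringCon a b := hab
    have h2 : J1.ringCon a b := (TwoSidedIdeal.rel_iff J1 a b).2 (h _ ((TwoSidedIdeal.rel_iff J0 a b).1 h1))
    exact (RingCon.eq J1.ringCon).2 h2)
  map_one' := rfl
  map_mul' := fun x y => Quotient.inductionOn₂ x y fun _ _ => rfl
  map_zero' := rfl
  map_add' := fun x y => Quotient.inductionOn₂ x y fun _ _ => rfl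
/-- For a chain of ideals `J₀ ⊆ J₁ ⊆ B` of `A`, the depths of the
quotient extensions `B/Jᵢ ⊆ A/Jᵢ` (realized as images of `B` in `A/Jᵢ`) satisfy
`1 ≤ d(B/J₁, A/J₁) ≤ d(B/J₀, A/J₀) ≤ d(B,A)`. -/
theorem depth_quotient_chain
    (k : Type u) [CommRing k] (A : Type u) [Ring A] [Algebra k A] (B : Subalgebra k A)
    (J0 J1 : TwoSidedIdeal A) (hJ01 : ∀ x ∈ J0, x ∈ J1) (hJ1B : ∀ x ∈ J1, x ∈ B) :
    (1 : ℕ∞) ≤ depth (B.toSubring.map (J1.ringCon.mk' : A →+* J1.ringCon.Quotient)) ∧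
    depth (B.toSubring.map (J1.ringCon.mk' : A →+* J1.ringCon.Quotient)) ≤
      depth (B.toSubring.map (J0.ringCon.mk' : A →+* J0.ringCon.Quotient)) ∧
    depth (B.toSubring.map (J0.ringCon.mk' : A →+* J0.ringCon.Quotient)) ≤
      depth B.toSubring := by
  have hsur0 : Function.Surjective (J0.ringCon.mk' : A →+* J0.ringCon.Quotient) :=
    fun y => Quotient.inductionOn' y fun a => ⟨a, rfl⟩
  have hsur1 : Function.Surjective (J1.ringCon.mk' : A →+* J1.ringCon.Quotient) :=
    fun y => Quotient.inductionOn' y fun a => ⟨a, rfl⟩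
  have hker1 : ∀ x, (J1.ringCon.mk' : A →+* J1.ringCon.Quotient) x = 0 → x ∈ B.toSubring :=
    fun x hx => hJ1B x ((TwoSidedIdeal.mem_iff J1 x).2 ((RingCon.eq J1.ringCon).1 hx))
  have hcomp : (factorHom J0 J1 hJ01).comp (J0.ringCon.mk' : A →+* J0.ringCon.Quotient) =
      (J1.ringCon.mk' : A →+* J1.ringCon.Quotient) := RingHom.ext fun _ => rfl
  have hsur01 : Function.Surjective (factorHom J0 J1 hJ01) := by
    intro y
    obtain ⟨a, rfl⟩ := hsur1 y
    exact ⟨J0.ringCon.mk' a, rfl⟩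
  have hker01 : ∀ x, factorHom J0 J1 hJ01 x = 0 →
      x ∈ B.toSubring.map (J0.ringCon.mk' : A →+* J0.ringCon.Quotient) := by
    intro x hx
    obtain ⟨a, rfl⟩ := hsur0 x
    have h : (J1.ringCon.mk' : A →+* J1.ringCon.Quotient) a = 0 := hx
    exact Subring.mem_map.2 ⟨a, hker1 a h, rfl⟩
  have hker0 : ∀ x, (J0.ringCon.mk' : A →+* J0.ringCon.Quotient) x = 0 → x ∈ B.toSubring :=
    fun x hx => hJ1B x (hJ01 x ((TwoSidedIdeal.mem_iff J0 x).2 ((RingCon.eq J0.ringCon).1 hx)))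
  refine ⟨one_le_depth _, ?_, depth_map_le _ hsur0 B.toSubring hker0⟩
  have h2 := depth_map_le (factorHom J0 J1 hJ01) hsur01
    (B.toSubring.map (J0.ringCon.mk' : A →+* J0.ringCon.Quotient)) hker01
  rwa [Subring.map_map, hcomp] at h2
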